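/- Let A ∈ 𝒮ⁿ[k] be a Robinson matrix and d ∈ 𝔻ᵏ. Then d satisfies the path condition for A if and only if β⁺(C)ᵀ d > 0 for every upper-bound-cycle C of A. -/

import Mathlib

/-- The standard unit vector `χ_t ∈ ℤᵏ` (as a function `ℕ → ℤ`, supported on index `t`). -/
def chi (t : ℕ) : ℕ → ℤ := fun i => if i = t then 1 else 0

/-- The dot product `bᵀ d = Σ_{i=1}^k b_i d_i`. -/
def dotProd (k : ℕ) (b : ℕ → ℤ) (d : ℕ → ℝ) : ℝ :=
  ∑ i ∈ Finset.Icc 1 k, (b i : ℝ) * d i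

/-- `A ∈ 𝒮ⁿ[k]`: a symmetric matrix with entries in `{0,…,k}`, diagonal `k`,
entries increasing towards the diagonal. -/
def IsRobinson (n k : ℕ) (a : Fin n → Fin n → ℕ) : Prop :=
  (∀ u v, a u v = a v u) ∧ (∀ u, a u u = k) ∧ (∀ u v, a u v ≤ k) ∧
    ∀ u v w : Fin n, u < v → v < w → a u w ≤ a u v ∧ a u w ≤ a v w

/-- `d ∈ 𝔻ᵏ`: threshold vectors with `d 1 > d 2 > ⋯ > d k > 0`
(values outside `{1,…,k}` are irrelevant). -/
def IsThreshold (k : ℕ) (d : ℕ → ℝ) : Prop :=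
  (∀ i, 1 ≤ i → i < k → d (i + 1) < d i) ∧ 0 < d k

/-- Uniform embedding: for all pairs `u,v` and all `t ≤ k`,
`a u v = t ↔ d_{t+1} < |f v − f u| ≤ d_t`, with conventions `d_0 = +∞`, `d_{k+1} = −∞`. -/
def IsUnifEmb (n k : ℕ) (a : Fin n → Fin n → ℕ) (d : ℕ → ℝ)
    (f : Fin n → ℝ) : Prop :=
  ∀ u v : Fin n, ∀ t : ℕ, t ≤ k →
    (a u v = t ↔ (t = k ∨ d (t + 1) < |f v - f u|) ∧ (t = 0 ∨ |f v - f u| ≤ d t))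

/-- The strict inequality system: for all `u < v` and all `t ≤ k`,
`a u v = t ↔ d_{t+1} < f v − f u < d_t`, with conventions `d_0 = +∞`, `d_{k+1} = 0`. -/
def SatisfiesStrict (n k : ℕ) (a : Fin n → Fin n → ℕ) (d : ℕ → ℝ)
    (f : Fin n → ℝ) : Prop :=
  ∀ u v : Fin n, u < v → ∀ t : ℕ, t ≤ k →
    (a u v = t ↔ ((if t = k then (0 : ℝ) else d (t + 1)) < f v - f u) ∧
      (t = 0 ∨ f v - f u < d t))

/-- `β⁺(x,y)`: for `x < y`, `β⁺(x,y) = χ_{a x y}` (junk value `χ_0` when `a x y = 0`,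
where it is undefined); for `x > y`, `β⁺(x,y) = −β⁻(y,x)`. -/
def betaP {n : ℕ} (k : ℕ) (a : Fin n → Fin n → ℕ) (x y : Fin n) : ℕ → ℤ :=
  if x < y then chi (a x y)
  else if y < x then (if a x y = k then 0 else -chi (a x y + 1))
  else 0

/-- `β⁻(x,y)`: for `x < y`, `β⁻(x,y) = χ_{a x y + 1}` if `a x y < k` and `0` if `a x y = k`;
for `x > y`, `β⁻(x,y) = −β⁺(y,x)`. -/
def betaM {n : ℕ} (k : ℕ) (a : Fin n → Fin n → ℕ) (x y : Fin n) : ℕ → ℤ :=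
  if x < y then (if a x y = k then 0 else chi (a x y + 1))
  else if y < x then -chi (a x y)
  else 0

/-- `β⁺(W) = Σ_i β⁺(w_{i−1}, w_i)` over the steps of the walk `W`. -/
def betaPWalk {n : ℕ} (k : ℕ) (a : Fin n → Fin n → ℕ) (w : List (Fin n)) : ℕ → ℤ :=
  ((w.zip w.tail).map fun p => betaP k a p.1 p.2).sum

/-- `β⁻(W) = Σ_i β⁻(w_{i−1}, w_i)` over the steps of the walk `W`. -/
def betaMWalk {n : ℕ} (k : ℕ) (a : Fin n → Fin n → ℕ) (w : List (Fin n)) : ℕ → ℤ :=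
  ((w.zip w.tail).map fun p => betaM k a p.1 p.2).sum

/-- A `(u,v)`-upper-bound-walk: a walk from `u` to `v` with consecutive entries distinct,
in which every increasing step is an edge (`a x y ≥ 1`). -/
def IsUBWalk {n : ℕ} (a : Fin n → Fin n → ℕ) (u v : Fin n) (w : List (Fin n)) : Prop :=
  w.head? = some u ∧ w.getLast? = some v ∧
    List.Chain' (fun x y => x ≠ y ∧ (x < y → 1 ≤ a x y)) w

/-- A `(u,v)`-lower-bound-walk: a walk from `u` to `v` with consecutive entries distinct,
in which every decreasing step is an edge (`a x y ≥ 1`). -/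
def IsLBWalk {n : ℕ} (a : Fin n → Fin n → ℕ) (u v : Fin n) (w : List (Fin n)) : Prop :=
  w.head? = some u ∧ w.getLast? = some v ∧
    List.Chain' (fun x y => x ≠ y ∧ (y < x → 1 ≤ a x y)) w

/-- An upper-bound-cycle: a `(u,u)`-upper-bound-walk of length `p ≥ 2` in which
`u = w_0 = w_p` is the only repeated vertex. -/
def IsUBCycle {n : ℕ} (a : Fin n → Fin n → ℕ) (w : List (Fin n)) : Prop :=
  ∃ u : Fin n, IsUBWalk a u u w ∧ 3 ≤ w.length ∧ w.dropLast.Nodup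

/-- The path condition for `A` and `d`: for all `u < v`, every `(u,v)`-upper-bound-path `W₁`
and every `(u,v)`-lower-bound-path `W₂` satisfy `β⁻(W₂)ᵀ d < β⁺(W₁)ᵀ d`. -/
def PathCondition (n k : ℕ) (a : Fin n → Fin n → ℕ) (d : ℕ → ℝ) : Prop :=
  ∀ u v : Fin n, u < v → ∀ w₁ w₂ : List (Fin n),
    IsUBWalk a u v w₁ → w₁.Nodup → IsLBWalk a u v w₂ → w₂.Nodup →
      dotProd k (betaMWalk k a w₂) d < dotProd k (betaPWalk k a w₁) d

/-- The prefix-sum partial order `⪯` on `ℤᵏ`. -/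
def Preceq (k : ℕ) (x y : ℕ → ℤ) : Prop :=
  ∀ t, 1 ≤ t → t ≤ k → ∑ i ∈ Finset.Icc 1 t, x i ≤ ∑ i ∈ Finset.Icc 1 t, y i

section wsum
variable {α : Type*} {M : Type*} [AddCommGroup M]

def wsum (g : α → α → M) : List α → M
  | [] => 0
  | [_] => 0
  | x :: y :: l => g x y + wsum g (y :: l)

@[simp] lemma wsum_nil (g : α → α → M) : wsum g [] = 0 := rfl
@[simp] lemma wsum_singleton (g : α → α → M) (x : α) : wsum g [x] = 0 := rfl
@[simp] lemma wsum_cons_cons (g : α → α → M) (x y : α) (l : List α) :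
    wsum g (x :: y :: l) = g x y + wsum g (y :: l) := rfl

lemma wsum_append_cons (g : α → α → M) (l1 : List α) (y : α) (l2 : List α) :
    wsum g (l1 ++ y :: l2) = wsum g (l1 ++ [y]) + wsum g (y :: l2) := by
  induction l1 with
  | nil => simp
  | cons x t ih =>
    cases t with
    | nil => simp
    | cons z t' =>
      simp only [List.cons_append, wsum_cons_cons] at *
      rw [ih]; abel

lemma wsum_reverse (g : α → α → M) (l : List α) :
    wsum g l.reverse = wsum (fun x y => g y x) l := by
  induction l with
  | nil => rfl
  | cons x t ih =>
    cases t with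
    | nil => rfl
    | cons y t' =>
      rw [show (x :: y :: t').reverse = t'.reverse ++ y :: [x] by simp]
      rw [wsum_append_cons, show t'.reverse ++ [y] = (y :: t').reverse by simp]
      rw [ih]
      simp only [wsum_cons_cons, wsum_singleton]
      abel

lemma wsum_neg (g : α → α → M) (l : List α) :
    wsum (fun x y => -(g x y)) l = - wsum g l := by
  induction l with
  | nil => simp
  | cons x t ih =>
    cases t with
    | nil => simp
    | cons y t' =>
      simp only [wsum_cons_cons] at *
      rw [ih]; abel

lemma exists_dup {l : List α} (h : ¬ l.Nodup) :
    ∃ (x : α) (l1 l2 l3 : List α), l = l1 ++ x :: (l2 ++ x :: l3) := by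
  induction l with
  | nil => simp at h
  | cons a t ih =>
    by_cases ha : a ∈ t
    · obtain ⟨s1, s2, rfl⟩ := List.append_of_mem ha
      exact ⟨a, [], s1, s2, by simp⟩
    · have ht : ¬ t.Nodup := fun hn => h (List.nodup_cons.2 ⟨ha, hn⟩)
      obtain ⟨x, l1, l2, l3, rfl⟩ := ih ht
      exact ⟨x, a :: l1, l2, l3, rfl⟩

end wsum
section betalemmas
variable {n : ℕ}

lemma betaPWalk_eq_wsum (k : ℕ) (a : Fin n → Fin n → ℕ) (w : List (Fin n)) :
    betaPWalk k a w = wsum (betaP k a) w := by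
  induction w with
  | nil => rfl
  | cons x t ih =>
    cases t with
    | nil => rfl
    | cons y l =>
      simp only [betaPWalk, List.tail_cons, List.zip_cons_cons, List.map_cons,
        List.sum_cons, wsum_cons_cons] at *
      rw [ih]

lemma betaMWalk_eq_wsum (k : ℕ) (a : Fin n → Fin n → ℕ) (w : List (Fin n)) :
    betaMWalk k a w = wsum (betaM k a) w := by
  induction w with
  | nil => rfl
  | cons x t ih =>
    cases t with
    | nil => rfl
    | cons y l =>
      simp only [betaMWalk, List.tail_cons, List.zip_cons_cons, List.map_cons,
        List.sum_cons, wsum_cons_cons] at *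
      rw [ih]

lemma betaM_swap (k : ℕ) (a : Fin n → Fin n → ℕ) (hsymm : ∀ u v, a u v = a v u)
    (x y : Fin n) : betaM k a y x = - betaP k a x y := by
  rcases lt_trichotomy x y with h | h | h
  · simp [betaM, betaP, h, asymm h, hsymm y x]
  · subst h
    simp [betaM, betaP]
  · simp only [betaM, betaP, if_pos h, if_neg (asymm h), hsymm y x]
    split_ifs <;> simp

lemma betaMWalk_reverse (k : ℕ) (a : Fin n → Fin n → ℕ) (hsymm : ∀ u v, a u v = a v u)
    (w : List (Fin n)) : betaMWalk k a w.reverse = - betaPWalk k a w := by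
  rw [betaMWalk_eq_wsum, betaPWalk_eq_wsum, wsum_reverse]
  have h : (fun (x y : Fin n) => betaM k a y x) = fun x y => -(betaP k a x y) := by
    funext x y
    exact betaM_swap k a hsymm x y
  rw [h, wsum_neg]

lemma betaPWalk_reverse (k : ℕ) (a : Fin n → Fin n → ℕ) (hsymm : ∀ u v, a u v = a v u)
    (w : List (Fin n)) : betaPWalk k a w.reverse = - betaMWalk k a w := by
  rw [betaMWalk_eq_wsum, betaPWalk_eq_wsum, wsum_reverse]
  have h : (fun (x y : Fin n) => betaP k a y x) = fun x y => -(betaM k a x y) := by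
    funext x y
    rw [betaM_swap k a hsymm y x]
    simp
  rw [h, wsum_neg]

end betalemmas

lemma dotProd_add (k : ℕ) (b1 b2 : ℕ → ℤ) (d : ℕ → ℝ) :
    dotProd k (b1 + b2) d = dotProd k b1 d + dotProd k b2 d := by
  simp [dotProd, add_mul, Finset.sum_add_distrib]

lemma dotProd_neg (k : ℕ) (b : ℕ → ℤ) (d : ℕ → ℝ) :
    dotProd k (-b) d = - dotProd k b d := by
  simp [dotProd]
section closed
variable {n : ℕ} (k : ℕ) (a : Fin n → Fin n → ℕ)

lemma closed_pos (hsymm : ∀ u v, a u v = a v u) (d : ℕ → ℝ)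
    (hcyc : ∀ C : List (Fin n), IsUBCycle a C → 0 < dotProd k (betaPWalk k a C) d) :
    ∀ (p : ℕ) (w : List (Fin n)), w.length ≤ p → 2 ≤ w.length →
      w.head? = w.getLast? →
      List.Chain' (fun x y => x ≠ y ∧ (x < y → 1 ≤ a x y)) w →
      0 < dotProd k (betaPWalk k a w) d := by
  intro p
  induction p with
  | zero => intro w h1 h2 _ _; omega
  | succ p ih =>
    intro w hlen hlen2 hclosed hchain
    by_cases h3 : w.length = 2
    · exfalso
      obtain ⟨x, y, rfl⟩ : ∃ x y, w = [x, y] := by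
        match w, h3 with
        | [x, y], _ => exact ⟨x, y, rfl⟩
      simp only [List.head?_cons, List.getLast?_cons_cons, List.getLast?_singleton,
        Option.some.injEq] at hclosed
      exact (List.isChain_cons_cons.1 hchain).1.1 hclosed
    · have h3' : 3 ≤ w.length := by omega
      by_cases hnd : w.dropLast.Nodup
      · obtain ⟨u, hu⟩ : ∃ u, w.head? = some u := by
          cases w with
          | nil => simp at hlen2
          | cons x t => exact ⟨x, rfl⟩
        exact hcyc w ⟨u, ⟨hu, hclosed ▸ hu, hchain⟩, h3', hnd⟩
      · have hw : w ≠ [] := by intro h; rw [h] at hlen2; simp at hlen2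
        obtain ⟨x, l1, l2, l3, hdec⟩ := exists_dup hnd
        obtain ⟨z, hz⟩ : ∃ z, w.getLast? = some z := by
          cases w with
          | nil => simp at hlen2
          | cons u t => exact ⟨(u :: t).getLast (by simp), List.getLast?_eq_getLast _⟩
        have hwz : w = (l1 ++ x :: (l2 ++ x :: l3)) ++ [z] := by
          conv_lhs => rw [← List.dropLast_append_getLast hw]
          rw [← hdec]
          congr 1
          have := List.getLast?_eq_getLast hw
          rw [this] at hz
          simpa using hz
        have hw2 : w = l1 ++ x :: (l2 ++ x :: (l3 ++ [z])) := by rw [hwz]; simp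
        -- l2 nonempty
        have hl2 : l2 ≠ [] := by
          intro h
          have hinf : List.Chain' (fun x y => x ≠ y ∧ (x < y → 1 ≤ a x y)) [x, x] :=
            hchain.infix ⟨l1, l3 ++ [z], by rw [hw2, h]; simp⟩
          exact (List.isChain_cons_cons.1 hinf).1.1 rfl
        have hl2len : 1 ≤ l2.length := List.length_pos_iff.2 hl2
        have hwlen : w.length = l1.length + l2.length + l3.length + 3 := by
          rw [hw2]; simp; omega
        -- sum decomposition
        have e1 : wsum (betaP k a) w
            = wsum (betaP k a) (l1 ++ [x]) + wsum (betaP k a) (x :: (l2 ++ x :: (l3 ++ [z]))) := by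
          rw [hw2, wsum_append_cons]
        have e2 : wsum (betaP k a) (x :: (l2 ++ x :: (l3 ++ [z])))
            = wsum (betaP k a) ((x :: l2) ++ [x]) + wsum (betaP k a) (x :: (l3 ++ [z])) := by
          rw [show x :: (l2 ++ x :: (l3 ++ [z])) = (x :: l2) ++ x :: (l3 ++ [z]) from by simp,
            wsum_append_cons]
        have e3 : wsum (betaP k a) (l1 ++ x :: (l3 ++ [z]))
            = wsum (betaP k a) (l1 ++ [x]) + wsum (betaP k a) (x :: (l3 ++ [z])) := by
          rw [wsum_append_cons]
        have hkey : betaPWalk k a w = betaPWalk k a ((x :: l2) ++ [x])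
            + betaPWalk k a (l1 ++ x :: (l3 ++ [z])) := by
          simp only [betaPWalk_eq_wsum]
          rw [e1, e2, e3]; abel
        -- C1 facts
        have hC1chain : List.Chain' (fun x y => x ≠ y ∧ (x < y → 1 ≤ a x y))
            ((x :: l2) ++ [x]) :=
          hchain.infix ⟨l1, l3 ++ [z], by rw [hw2]; simp⟩
        have hC1closed : ((x :: l2) ++ [x]).head? = ((x :: l2) ++ [x]).getLast? := by
          rw [List.getLast?_concat]; rfl
        have hC1len : ((x :: l2) ++ [x]).length = l2.length + 2 := by simp
        -- C2 facts
        have hchain2 := hchain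
        rw [hw2, List.Chain', List.isChain_append] at hchain2
        obtain ⟨hcl1, _, hjunc⟩ := hchain2
        have hsuf : List.Chain' (fun x y => x ≠ y ∧ (x < y → 1 ≤ a x y))
            (x :: (l3 ++ [z])) :=
          hchain.suffix ⟨l1 ++ x :: l2, by rw [hw2]; simp⟩
        have hC2chain : List.Chain' (fun x y => x ≠ y ∧ (x < y → 1 ≤ a x y))
            (l1 ++ x :: (l3 ++ [z])) := by
          rw [List.Chain', List.isChain_append]
          exact ⟨hcl1, hsuf, fun p hp q hq => by
            simp only [List.head?_cons, Option.mem_def, Option.some.injEq] at hq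
            exact hq ▸ hjunc p hp x rfl⟩
        have hC2head : (l1 ++ x :: (l3 ++ [z])).head? = w.head? := by
          rw [hw2]
          cases l1 <;> simp
        have hC2last : (l1 ++ x :: (l3 ++ [z])).getLast? = some z := by
          rw [show l1 ++ x :: (l3 ++ [z]) = (l1 ++ x :: l3) ++ [z] from by simp,
            List.getLast?_concat]
        have hC2closed : (l1 ++ x :: (l3 ++ [z])).head? = (l1 ++ x :: (l3 ++ [z])).getLast? := by
          rw [hC2head, hclosed, hz, hC2last]
        have hC2len : (l1 ++ x :: (l3 ++ [z])).length = l1.length + l3.length + 2 := by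
          simp; omega
        have p1 := ih ((x :: l2) ++ [x]) (by omega) (by omega) hC1closed hC1chain
        have p2 := ih (l1 ++ x :: (l3 ++ [z])) (by omega) (by omega) hC2closed hC2chain
        rw [hkey, dotProd_add]
        linarith

end closed
section mainaux
variable {n : ℕ} (k : ℕ) (a : Fin n → Fin n → ℕ)

lemma betaPWalk_pair (x y : Fin n) : betaPWalk k a [x, y] = betaP k a x y := by
  simp [betaPWalk]

lemma betaMWalk_pair (x y : Fin n) : betaMWalk k a [x, y] = betaM k a x y := by
  simp [betaMWalk]

lemma betaPWalk_cons_cons' (x y : Fin n) (l : List (Fin n)) :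
    betaPWalk k a (x :: y :: l) = betaP k a x y + betaPWalk k a (y :: l) := by
  simp only [betaPWalk_eq_wsum, wsum_cons_cons]

lemma chainUB_reverse (hsymm : ∀ u v, a u v = a v u) {w : List (Fin n)}
    (h : List.Chain' (fun x y => x ≠ y ∧ (y < x → 1 ≤ a x y)) w) :
    List.Chain' (fun x y => x ≠ y ∧ (x < y → 1 ≤ a x y)) w.reverse := by
  rw [List.Chain', List.isChain_reverse]
  refine h.imp ?_
  rintro p q ⟨h1, h2⟩
  exact ⟨h1.symm, fun hlt => (hsymm q p) ▸ h2 hlt⟩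

lemma chainLB_reverse (hsymm : ∀ u v, a u v = a v u) {w : List (Fin n)}
    (h : List.Chain' (fun x y => x ≠ y ∧ (x < y → 1 ≤ a x y)) w) :
    List.Chain' (fun x y => x ≠ y ∧ (y < x → 1 ≤ a x y)) w.reverse := by
  rw [List.Chain', List.isChain_reverse]
  refine h.imp ?_
  rintro p q ⟨h1, h2⟩
  exact ⟨h1.symm, fun hlt => (hsymm q p) ▸ h2 hlt⟩

end mainaux

/-- `d ∈ 𝔻ᵏ` satisfies the path condition for the Robinson matrix `A`
if and only if `β⁺(C)ᵀ d > 0` for every upper-bound-cycle `C` of `A`. -/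
theorem statement14 (n k : ℕ) (hn : 1 ≤ n) (hk : 1 ≤ k) (a : Fin n → Fin n → ℕ)
    (hA : IsRobinson n k a) (d : ℕ → ℝ) (hd : IsThreshold k d) :
    PathCondition n k a d ↔
      ∀ C : List (Fin n), IsUBCycle a C → 0 < dotProd k (betaPWalk k a C) d := by
  obtain ⟨hsymm, -, -, -⟩ := hA
  constructor
  · -- path condition → cycles positive
    intro hpc C hC
    obtain ⟨u, ⟨hhead, hlast, hchain⟩, hlen, hnd⟩ := hC
    match C, hlen with
    | u' :: x :: rest, _ =>
    have hu : u' = u := by simpa using hhead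
    subst hu
    obtain ⟨hux, hch2⟩ := List.isChain_cons_cons.1 hchain
    have hlastP2 : (x :: rest).getLast? = some u' := by
      have h' : (u' :: x :: rest).getLast? = (x :: rest).getLast? := List.getLast?_cons_cons
      rw [← h']; exact hlast
    -- nodup of x :: rest
    have hndC : (u' :: (x :: rest).dropLast).Nodup := by
      rw [← List.dropLast_cons₂]; exact hnd
    obtain ⟨hu_not, hnd'⟩ := List.nodup_cons.1 hndC
    have hgl : (x :: rest).getLast (by simp) = u' := by
      have := List.getLast?_eq_getLast_of_ne_nil (l := x :: rest) (by simp)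
      rw [this] at hlastP2
      simpa using hlastP2
    have hP2eq : x :: rest = (x :: rest).dropLast ++ [u'] := by
      conv_lhs => rw [← List.dropLast_append_getLast (l := x :: rest) (by simp)]
      rw [hgl]
    have hP2nd : (x :: rest).Nodup := by
      rw [hP2eq]
      exact (List.perm_append_singleton u' _).nodup_iff.2 (List.nodup_cons.2 ⟨hu_not, hnd'⟩)
    rcases lt_or_gt_of_ne hux.1 with hlt | hgt
    · -- u < x
      have hW1 : IsUBWalk a u' x [u', x] := ⟨rfl, rfl, List.isChain_pair.2 hux⟩
      have hW2 : IsLBWalk a u' x (x :: rest).reverse :=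
        ⟨by rw [List.head?_reverse]; exact hlastP2,
         by rw [List.getLast?_reverse]; rfl,
         chainLB_reverse a hsymm hch2⟩
      have hres := hpc u' x hlt [u', x] ((x :: rest).reverse) hW1
        (by simp [hux.1]) hW2 (List.nodup_reverse.2 hP2nd)
      rw [betaMWalk_reverse k a hsymm, dotProd_neg, betaPWalk_pair] at hres
      rw [betaPWalk_cons_cons', dotProd_add]
      linarith
    · -- x < u
      have hW1 : IsUBWalk a x u' (x :: rest) := ⟨rfl, hlastP2, hch2⟩
      have hW2 : IsLBWalk a x u' [x, u'] :=
        ⟨rfl, rfl, List.isChain_pair.2 ⟨hux.1.symm, fun h => absurd h (not_lt.2 hgt.le)⟩⟩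
      have hres := hpc x u' hgt (x :: rest) [x, u'] hW1 hP2nd hW2 (by simp [hux.1.symm])
      rw [betaMWalk_pair, betaM_swap k a hsymm u' x, dotProd_neg] at hres
      rw [betaPWalk_cons_cons', dotProd_add]
      linarith
  · -- cycles positive → path condition
    intro hcyc u v huv w₁ w₂ hW1 hW1nd hW2 hW2nd
    obtain ⟨h1h, h1l, h1c⟩ := hW1
    obtain ⟨h2h, h2l, h2c⟩ := hW2
    have hne1 : w₁ ≠ [] := by intro h; rw [h] at h1h; simp at h1h
    have hne2 : w₂ ≠ [] := by intro h; rw [h] at h2h; simp at h2h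
    have hlen1 : 2 ≤ w₁.length := by
      match w₁, h1h with
      | [x], hh =>
        exfalso
        have hx : x = u := by simpa using hh
        have hy : x = v := by simpa using h1l
        exact absurd (hx ▸ hy) huv.ne
      | x :: y :: t, _ => simp
    have hlen2 : 2 ≤ w₂.length := by
      match w₂, h2h with
      | [x], hh =>
        exfalso
        have hx : x = u := by simpa using hh
        have hy : x = v := by simpa using h2l
        exact absurd (hx ▸ hy) huv.ne
      | x :: y :: t, _ => simp
    -- reverse of w₂ is an upper-bound walk from v to u
    have hrevl : w₂.reverse.getLast? = some u := by rw [List.getLast?_reverse]; exact h2h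
    have hrevc : List.Chain' (fun x y => x ≠ y ∧ (x < y → 1 ≤ a x y)) w₂.reverse :=
      chainUB_reverse a hsymm h2c
    obtain ⟨y, tl', htl⟩ : ∃ y tl', w₂.reverse = v :: y :: tl' := by
      match hrev : w₂.reverse, hlr : w₂.reverse.head? with
      | [], _ =>
        exfalso
        have : w₂ = [] := by simpa using congrArg List.reverse hrev
        exact hne2 this
      | [x], _ =>
        exfalso
        have : w₂.length = 1 := by rw [← List.length_reverse, hrev]; rfl
        omega
      | x :: y :: t, _ =>
        have hx : x = v := by
          have : w₂.reverse.head? = some v := by rw [List.head?_reverse]; exact h2l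
          rw [hrev] at this
          simpa using this
        exact ⟨y, t, by rw [hx]⟩
    have hW1eq : w₁ = w₁.dropLast ++ [v] := by
      have hgl : w₁.getLast hne1 = v := by
        have := List.getLast?_eq_getLast_of_ne_nil hne1
        rw [this] at h1l
        simpa using h1l
      conv_lhs => rw [← List.dropLast_append_getLast hne1]
      rw [hgl]
    -- the closed walk
    have hChead : (w₁ ++ y :: tl').head? = some u := by
      match w₁, h1h with
      | x :: t, hh => simpa using hh
    have hClast : (w₁ ++ y :: tl').getLast? = some u := by
      have h' : (v :: y :: tl').getLast? = (y :: tl').getLast? := List.getLast?_cons_cons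
      rw [List.getLast?_append_of_ne_nil _ (by simp), ← h', ← htl]
      exact hrevl
    have hCchain : List.Chain' (fun x y => x ≠ y ∧ (x < y → 1 ≤ a x y)) (w₁ ++ y :: tl') := by
      rw [List.Chain', List.isChain_append]
      refine ⟨h1c, ?_, ?_⟩
      · have := hrevc
        rw [htl] at this
        exact this.tail
      · intro p hp q hq
        have hpv : p = v := by rw [h1l] at hp; exact (by simpa using hp : v = p).symm
        have hqy : q = y := by exact (by simpa using hq : y = q).symm
        have := hrevc
        rw [htl] at this
        exact hpv ▸ hqy ▸ (List.isChain_cons_cons.1 this).1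
    have hClen : 3 ≤ (w₁ ++ y :: tl').length := by
      rw [List.length_append]
      simp only [List.length_cons]
      omega
    have hbeta : betaPWalk k a (w₁ ++ y :: tl')
        = betaPWalk k a w₁ + betaPWalk k a w₂.reverse := by
      simp only [betaPWalk_eq_wsum]
      conv_lhs => rw [hW1eq]
      rw [show (w₁.dropLast ++ [v]) ++ y :: tl' = w₁.dropLast ++ v :: (y :: tl') from by simp,
        wsum_append_cons, ← hW1eq, ← htl]
    have hpos := closed_pos k a hsymm d hcyc (w₁ ++ y :: tl').length (w₁ ++ y :: tl')
      le_rfl (by omega) (hChead.trans hClast.symm) hCchain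
    rw [hbeta, dotProd_add, betaPWalk_reverse k a hsymm, dotProd_neg] at hpos
    linarith
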